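/- Let d ≥ 4, A = { (z₁,z₂) ∈ ℝ × ℝ^{d-1} : z₁ > 4, |z₂| ≤ √z₁ }, and V(z) = -(1/z₁) 1_A(z). Then sup_{x ∈ ℝ^d} ∫_{ℝ^d} |V(z)| |z - x|^{2-d} dz < ∞. -/

import Mathlib

open MeasureTheory Real Set Metric
open scoped ENNReal NNReal

noncomputable def kball (m : ℕ) : ℝ≥0∞ := ENNReal.ofReal (Real.sqrt π ^ m / Real.Gamma (m / 2 + 1))

lemma kball_lt_top (m : ℕ) : kball m < ⊤ := ENNReal.ofReal_lt_top

lemma dyadic (m : ℕ) (hm : 3 ≤ m) (R : ℝ) (hR : 0 < R) :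
    ∫⁻ y in ball (0 : EuclideanSpace ℝ (Fin m)) R, ENNReal.ofReal (‖y‖ ^ ((2:ℝ) - m)) ≤
      ENNReal.ofReal (R ^ 2) * (ENNReal.ofReal ((2:ℝ) ^ (m:ℝ)) * kball m * 2) := by
  haveI : Nonempty (Fin m) := ⟨⟨0, by omega⟩⟩
  set f : EuclideanSpace ℝ (Fin m) → ℝ≥0∞ := fun y => ENNReal.ofReal (‖y‖ ^ ((2:ℝ) - m)) with hf
  set S : ℕ → Set (EuclideanSpace ℝ (Fin m)) :=
    fun k => ball 0 (R / 2 ^ k) \ ball 0 (R / 2 ^ (k + 1)) with hS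
  have hcover : ball (0 : EuclideanSpace ℝ (Fin m)) R ⊆ {0} ∪ ⋃ k, S k := by
    intro y hy
    rcases eq_or_ne y 0 with h | h
    · exact Or.inl h
    refine Or.inr ?_
    have hy0 : 0 < ‖y‖ := norm_pos_iff.2 h
    have hyR : ‖y‖ < R := by simpa [dist_zero_right] using hy
    have hex : ∃ k, R / 2 ^ (k + 1) ≤ ‖y‖ := by
      obtain ⟨k, hk⟩ := pow_unbounded_of_one_lt (R / ‖y‖) (by norm_num : (1:ℝ) < 2)
      refine ⟨k, ?_⟩
      rw [div_lt_iff₀ hy0] at hk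
      rw [div_le_iff₀ (by positivity)]
      calc R ≤ ‖y‖ * 2 ^ k := by linarith [hk]
        _ ≤ ‖y‖ * 2 ^ (k + 1) := by
            have : (2:ℝ) ^ k ≤ 2 ^ (k+1) := by
              apply pow_le_pow_right₀ (by norm_num); omega
            nlinarith
    let k₀ := Nat.find hex
    have h1 : R / 2 ^ (k₀ + 1) ≤ ‖y‖ := Nat.find_spec hex
    have h2 : ‖y‖ < R / 2 ^ k₀ := by
      rcases Nat.eq_zero_or_pos k₀ with h0 | h0
      · simpa [h0] using hyR
      · obtain ⟨j, hj⟩ := Nat.exists_eq_add_of_lt h0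
        have := Nat.find_min hex (m := j) (by omega)
        push_neg at this
        have : ‖y‖ < R / 2 ^ (j + 1) := this
        have hk : k₀ = j + 1 := by omega
        rwa [hk]
    refine mem_iUnion.2 ⟨k₀, ?_⟩
    constructor
    · simpa [dist_zero_right] using h2
    · simpa [dist_zero_right, not_lt] using h1
  calc ∫⁻ y in ball (0 : EuclideanSpace ℝ (Fin m)) R, f y
      ≤ ∫⁻ y in ({0} ∪ ⋃ k, S k : Set (EuclideanSpace ℝ (Fin m))), f y := lintegral_mono_set hcover
    _ ≤ (∫⁻ y in ({0} : Set (EuclideanSpace ℝ (Fin m))), f y) + ∫⁻ y in (⋃ k, S k), f y :=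
        lintegral_union_le _ _ _
    _ ≤ 0 + ∑' k, ∫⁻ y in S k, f y := by
        gcongr
        · rw [lintegral_singleton]
          simp [hf, Real.zero_rpow (by push_cast; nlinarith [(show (3:ℝ) ≤ m by exact_mod_cast hm)] : (2:ℝ) - m ≠ 0)]
        · exact lintegral_iUnion_le _ _
    _ ≤ ∑' k, (ENNReal.ofReal (R ^ 2) * ENNReal.ofReal ((2:ℝ) ^ (m:ℝ)) * kball m) * 2⁻¹ ^ k := by
        rw [zero_add]
        refine ENNReal.tsum_le_tsum fun k => ?_
        set a : ℝ := R / 2 ^ k with haa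
        have ha : 0 < a := by positivity
        have hhalf : R / 2 ^ (k + 1) = a / 2 := by
          rw [haa, div_div, ← pow_succ]
        have hpt : ∀ y ∈ S k, f y ≤ ENNReal.ofReal ((a / 2) ^ ((2:ℝ) - m)) := by
          intro y hy
          have hylb : a / 2 ≤ ‖y‖ := by
            have := hy.2
            rw [hhalf] at this
            simpa [dist_zero_right, not_lt] using this
          exact ENNReal.ofReal_le_ofReal
            (Real.rpow_le_rpow_of_nonpos (by positivity) hylb
              (by nlinarith [(show (3:ℝ) ≤ m by exact_mod_cast hm)]))
        calc ∫⁻ y in S k, f y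
            ≤ ∫⁻ _ in S k, ENNReal.ofReal ((a / 2) ^ ((2:ℝ) - m)) :=
              setLIntegral_mono measurable_const hpt
          _ = ENNReal.ofReal ((a / 2) ^ ((2:ℝ) - m)) * volume (S k) := setLIntegral_const _ _
          _ ≤ ENNReal.ofReal ((a / 2) ^ ((2:ℝ) - m)) *
                volume (ball (0 : EuclideanSpace ℝ (Fin m)) a) := by
              exact mul_le_mul_right (measure_mono diff_subset) _
          _ ≤ (ENNReal.ofReal (R ^ 2) * ENNReal.ofReal ((2:ℝ) ^ (m:ℝ)) * kball m) * 2⁻¹ ^ k := by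
              rw [EuclideanSpace.volume_ball]
              simp only [Fintype.card_fin]
              rw [← ENNReal.ofReal_pow ha.le]
              rw [← mul_assoc, ← ENNReal.ofReal_mul (by positivity)]
              have hkey : (a / 2) ^ ((2:ℝ) - m) * a ^ m = (R ^ 2 * ((4:ℝ)⁻¹) ^ k) * (2:ℝ) ^ ((m:ℝ) - 2) := by
                have h1 : (a / 2) ^ ((2:ℝ) - m) = a ^ ((2:ℝ) - m) * (2:ℝ) ^ ((m:ℝ) - 2) := by
                  rw [Real.div_rpow ha.le (by norm_num : (0:ℝ) ≤ 2), div_eq_mul_inv,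
                    ← Real.rpow_neg (by norm_num : (0:ℝ) ≤ 2), neg_sub]
                have h2 : a ^ ((2:ℝ) - m) * a ^ m = a ^ 2 := by
                  rw [← Real.rpow_natCast a m, ← Real.rpow_add ha]
                  rw [show (2:ℝ) - m + m = ((2:ℕ):ℝ) by push_cast; ring, Real.rpow_natCast]
                have h3 : a ^ 2 = R ^ 2 * ((4:ℝ)⁻¹) ^ k := by
                  have h4 : ((2:ℝ)) ^ (k * 2) = 4 ^ k := by
                    rw [mul_comm, pow_mul]; norm_num
                  rw [haa, div_pow, ← pow_mul, h4, inv_pow, ← div_eq_mul_inv]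
                rw [h1]; nlinarith [h2, h3, Real.rpow_nonneg (show (0:ℝ) ≤ 2 by norm_num) ((m:ℝ) - 2), sq_nonneg a]
              rw [hkey]
              rw [ENNReal.ofReal_mul (by positivity), ENNReal.ofReal_mul (by positivity)]
              have e1 : ENNReal.ofReal ((2:ℝ) ^ ((m:ℝ) - 2)) ≤ ENNReal.ofReal ((2:ℝ) ^ (m:ℝ)) :=
                ENNReal.ofReal_le_ofReal
                  (Real.rpow_le_rpow_of_exponent_le one_le_two (by linarith [Nat.cast_nonneg (α := ℝ) m]))
              have e2 : ENNReal.ofReal (((4:ℝ)⁻¹) ^ k) ≤ 2⁻¹ ^ k := by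
                rw [ENNReal.ofReal_pow (by norm_num)]
                have hle : ENNReal.ofReal ((4:ℝ)⁻¹) ≤ 2⁻¹ := by
                  calc ENNReal.ofReal ((4:ℝ)⁻¹) ≤ ENNReal.ofReal ((2:ℝ)⁻¹) :=
                      ENNReal.ofReal_le_ofReal (by norm_num)
                    _ = 2⁻¹ := by
                      rw [ENNReal.ofReal_inv_of_pos (by norm_num)]
                      norm_num
                exact pow_le_pow_left' hle k
              calc ENNReal.ofReal (R ^ 2) * ENNReal.ofReal (((4:ℝ)⁻¹) ^ k) *
                    ENNReal.ofReal ((2:ℝ) ^ ((m:ℝ) - 2)) * kball m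
                  ≤ ENNReal.ofReal (R ^ 2) * 2⁻¹ ^ k * ENNReal.ofReal ((2:ℝ) ^ (m:ℝ)) * kball m := by
                    gcongr
                _ = ENNReal.ofReal (R ^ 2) * ENNReal.ofReal ((2:ℝ) ^ (m:ℝ)) * kball m * 2⁻¹ ^ k := by
                    ring
    _ ≤ ENNReal.ofReal (R ^ 2) * (ENNReal.ofReal ((2:ℝ) ^ (m:ℝ)) * kball m * 2) := by
        rw [ENNReal.tsum_mul_left, ENNReal.tsum_geometric, ENNReal.one_sub_inv_two, inv_inv]
        ring_nf
        exact le_refl _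


lemma lint_Ioi_rpow {c s : ℝ} (hc : 0 < c) (hs : s < -1) :
    ∫⁻ t in Ioi c, ENNReal.ofReal (t ^ s) = ENNReal.ofReal (-c ^ (s + 1) / (s + 1)) := by
  rw [← ofReal_integral_eq_lintegral_ofReal (integrableOn_Ioi_rpow_of_lt hs hc)
      (by filter_upwards [ae_restrict_mem measurableSet_Ioi] with t ht
          exact Real.rpow_nonneg (le_of_lt (lt_trans hc ht)) s),
    integral_Ioi_rpow_of_lt hs hc]

lemma max_lint {R s : ℝ} (hR : 0 < R) (hs : s < -1) :
    ∫⁻ a : ℝ, ENNReal.ofReal ((max |a| R) ^ s) ≤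
      ENNReal.ofReal (2 * R ^ (s + 1)) + 2 * ENNReal.ofReal (-R ^ (s + 1) / (s + 1)) := by
  have hcover : (univ : Set ℝ) ⊆ Icc (-R) R ∪ (Iio (-R) ∪ Ioi R) := by
    intro a _
    rcases le_or_gt a (-R) with h | h
    · rcases eq_or_lt_of_le h with h' | h'
      · exact Or.inl ⟨by linarith, by linarith⟩
      · exact Or.inr (Or.inl h')
    rcases le_or_gt a R with h2 | h2
    · exact Or.inl ⟨h.le, h2⟩
    · exact Or.inr (Or.inr h2)
  have hIoi : ∫⁻ a in Ioi R, ENNReal.ofReal ((max |a| R) ^ s) =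
      ENNReal.ofReal (-R ^ (s + 1) / (s + 1)) := by
    rw [← lint_Ioi_rpow hR hs]
    refine setLIntegral_congr_fun measurableSet_Ioi (fun a ha => ?_)
    have : max |a| R = a := by
      rw [abs_of_pos (hR.trans ha), max_eq_left (le_of_lt ha)]
    rw [this]
  have hneg : ∫⁻ a in Iio (-R), ENNReal.ofReal ((max |a| R) ^ s) =
      ENNReal.ofReal (-R ^ (s + 1) / (s + 1)) := by
    have key := (Measure.measurePreserving_neg (volume : Measure ℝ)).setLIntegral_comp_emb
      (MeasurableEquiv.neg ℝ).measurableEmbedding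
      (fun a : ℝ => ENNReal.ofReal ((max |a| R) ^ s)) (Ioi R)
    have himg : (Neg.neg : ℝ → ℝ) '' Ioi R = Iio (-R) := by
      rw [Set.image_neg_eq_neg, Set.neg_Ioi]
    rw [himg] at key
    rw [← key, ← hIoi]
    refine setLIntegral_congr_fun measurableSet_Ioi (fun a _ => ?_)
    simp [abs_neg]
  calc ∫⁻ a : ℝ, ENNReal.ofReal ((max |a| R) ^ s)
      = ∫⁻ a in (univ : Set ℝ), ENNReal.ofReal ((max |a| R) ^ s) := by
        rw [Measure.restrict_univ]
    _ ≤ ∫⁻ a in Icc (-R) R ∪ (Iio (-R) ∪ Ioi R), ENNReal.ofReal ((max |a| R) ^ s) :=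
        lintegral_mono_set hcover
    _ ≤ (∫⁻ a in Icc (-R) R, ENNReal.ofReal ((max |a| R) ^ s)) +
        ((∫⁻ a in Iio (-R), ENNReal.ofReal ((max |a| R) ^ s)) +
          ∫⁻ a in Ioi R, ENNReal.ofReal ((max |a| R) ^ s)) :=
        le_trans (lintegral_union_le _ _ _) (by gcongr; exact lintegral_union_le _ _ _)
    _ ≤ ENNReal.ofReal (2 * R ^ (s + 1)) + 2 * ENNReal.ofReal (-R ^ (s + 1) / (s + 1)) := by
        rw [hIoi, hneg]
        have hIcc : ∫⁻ a in Icc (-R) R, ENNReal.ofReal ((max |a| R) ^ s) ≤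
            ENNReal.ofReal (2 * R ^ (s + 1)) := by
          have hpt : ∀ a ∈ Icc (-R) R, ENNReal.ofReal ((max |a| R) ^ s) ≤
              ENNReal.ofReal (R ^ s) := by
            intro a ha
            have : max |a| R = R := max_eq_right (abs_le.2 ⟨ha.1, ha.2⟩)
            rw [this]
          calc ∫⁻ a in Icc (-R) R, ENNReal.ofReal ((max |a| R) ^ s)
              ≤ ∫⁻ _ in Icc (-R) R, ENNReal.ofReal (R ^ s) :=
                setLIntegral_mono measurable_const hpt
            _ = ENNReal.ofReal (R ^ s) * volume (Icc (-R) R) := setLIntegral_const _ _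
            _ = ENNReal.ofReal (2 * R ^ (s + 1)) := by
                rw [Real.volume_Icc, ← ENNReal.ofReal_mul (Real.rpow_nonneg hR.le s)]
                congr 1
                rw [Real.rpow_add_one hR.ne' s]
                ring
        calc _ ≤ ENNReal.ofReal (2 * R ^ (s + 1)) +
              (ENNReal.ofReal (-R ^ (s + 1) / (s + 1)) + ENNReal.ofReal (-R ^ (s + 1) / (s + 1))) := by
              gcongr
          _ = ENNReal.ofReal (2 * R ^ (s + 1)) + 2 * ENNReal.ofReal (-R ^ (s + 1) / (s + 1)) := by
              rw [two_mul]
              ring_nf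

lemma oneD (n : ℕ) (hn : 3 ≤ n) (x₁ : ℝ) :
    ∫⁻ t in Ioi (4:ℝ),
        ENNReal.ofReal (t ^ (((n:ℝ) - 2) / 2) *
          (max |t - x₁| (Real.sqrt (max x₁ 4))) ^ ((2:ℝ) - ((n:ℝ) + 1))) ≤
      4 * ENNReal.ofReal ((2:ℝ) ^ (n:ℝ)) +
        ENNReal.ofReal ((2:ℝ) ^ (n:ℝ)) *
          ENNReal.ofReal (-(4:ℝ) ^ ((-3/2:ℝ) + 1) / ((-3/2:ℝ) + 1)) := by
  set M : ℝ := max x₁ 4 with hMdef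
  have hM4 : (4:ℝ) ≤ M := le_max_right _ _
  have hMpos : (0:ℝ) < M := by linarith
  set R : ℝ := Real.sqrt M with hRdef
  have hRpos : (0:ℝ) < R := Real.sqrt_pos.2 hMpos
  have hR2 : R ^ 2 = M := Real.sq_sqrt hMpos.le
  set p : ℝ := ((n:ℝ) - 2) / 2 with hpdef
  set e : ℝ := (2:ℝ) - ((n:ℝ) + 1) with hedef
  have hn3 : (3:ℝ) ≤ n := by exact_mod_cast hn
  have hp0 : 0 ≤ p := by rw [hpdef]; linarith
  have he1 : e < -1 := by rw [hedef]; linarith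
  have he0 : e ≤ 0 := by linarith
  have hsplit : Ioi (4:ℝ) = Ioc 4 (2 * M) ∪ Ioi (2 * M) :=
    (Ioc_union_Ioi_eq_Ioi (by linarith)).symm
  rw [hsplit]
  refine le_trans (lintegral_union_le _ _ _) ?_
  have piece1 : ∫⁻ t in Ioc (4:ℝ) (2 * M),
      ENNReal.ofReal (t ^ p * (max |t - x₁| R) ^ e) ≤ 4 * ENNReal.ofReal ((2:ℝ) ^ (n:ℝ)) := by
    have step1 : ∫⁻ t in Ioc (4:ℝ) (2 * M),
        ENNReal.ofReal (t ^ p * (max |t - x₁| R) ^ e) ≤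
        ∫⁻ t in Ioc (4:ℝ) (2 * M),
          ENNReal.ofReal ((2 * M) ^ p) * ENNReal.ofReal ((max |t - x₁| R) ^ e) := by
      refine setLIntegral_mono' measurableSet_Ioc fun t ht => ?_
      rw [← ENNReal.ofReal_mul (Real.rpow_nonneg (by linarith) p)]
      refine ENNReal.ofReal_le_ofReal ?_
      have htp : t ^ p ≤ (2 * M) ^ p :=
        Real.rpow_le_rpow (by linarith [ht.1]) ht.2 hp0
      exact mul_le_mul_of_nonneg_right htp (Real.rpow_nonneg (le_max_of_le_right hRpos.le) e)
    have step2 : ∫⁻ t in Ioc (4:ℝ) (2 * M),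
        ENNReal.ofReal ((2 * M) ^ p) * ENNReal.ofReal ((max |t - x₁| R) ^ e) =
        ENNReal.ofReal ((2 * M) ^ p) *
          ∫⁻ t in Ioc (4:ℝ) (2 * M), ENNReal.ofReal ((max |t - x₁| R) ^ e) :=
      lintegral_const_mul' _ _ ENNReal.ofReal_ne_top
    have step3 : ∫⁻ t in Ioc (4:ℝ) (2 * M), ENNReal.ofReal ((max |t - x₁| R) ^ e) ≤
        ENNReal.ofReal (2 * R ^ (e + 1)) + 2 * ENNReal.ofReal (-R ^ (e + 1) / (e + 1)) := by
      refine le_trans (setLIntegral_le_lintegral _ _) ?_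
      have htrans : ∫⁻ t : ℝ, ENNReal.ofReal ((max |t - x₁| R) ^ e) =
          ∫⁻ a : ℝ, ENNReal.ofReal ((max |a| R) ^ e) := by
        have := lintegral_add_right_eq_self (μ := (volume : Measure ℝ))
          (fun a : ℝ => ENNReal.ofReal ((max |a| R) ^ e)) (-x₁)
        calc ∫⁻ t : ℝ, ENNReal.ofReal ((max |t - x₁| R) ^ e)
            = ∫⁻ t : ℝ, ENNReal.ofReal ((max |t + -x₁| R) ^ e) := by
              simp_rw [sub_eq_add_neg]
          _ = _ := this
      rw [htrans]
      exact max_lint hRpos he1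
    have hBnn : (0:ℝ) ≤ R ^ (e + 1) := Real.rpow_nonneg hRpos.le _
    have hkey : (2 * M) ^ p * R ^ (e + 1) ≤ (2:ℝ) ^ (n:ℝ) := by
      have h1 : (2 * M) ^ p = 2 ^ p * M ^ p := Real.mul_rpow (by norm_num) hMpos.le
      have h2 : R ^ (e + 1) = M ^ ((1/2) * (e + 1)) := by
        rw [hRdef, Real.sqrt_eq_rpow, ← Real.rpow_mul hMpos.le]
      have h3 : M ^ p * M ^ ((1/2) * (e + 1)) = 1 := by
        rw [← Real.rpow_add hMpos]
        have : p + (1/2) * (e + 1) = 0 := by rw [hpdef, hedef]; ring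
        rw [this, Real.rpow_zero]
      calc (2 * M) ^ p * R ^ (e + 1) = 2 ^ p * (M ^ p * M ^ ((1/2) * (e + 1))) := by
            rw [h1, h2]; ring
        _ = 2 ^ p := by rw [h3, mul_one]
        _ ≤ (2:ℝ) ^ (n:ℝ) := Real.rpow_le_rpow_of_exponent_le one_le_two (by rw [hpdef]; linarith)
    calc ∫⁻ t in Ioc (4:ℝ) (2 * M), ENNReal.ofReal (t ^ p * (max |t - x₁| R) ^ e)
        ≤ ENNReal.ofReal ((2 * M) ^ p) *
            (ENNReal.ofReal (2 * R ^ (e + 1)) + 2 * ENNReal.ofReal (-R ^ (e + 1) / (e + 1))) := by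
          refine le_trans step1 ?_
          rw [step2]
          exact mul_le_mul_right step3 _
      _ ≤ ENNReal.ofReal ((2 * M) ^ p) * (4 * ENNReal.ofReal (R ^ (e + 1))) := by
          refine mul_le_mul_right ?_ _
          have hb1 : ENNReal.ofReal (2 * R ^ (e + 1)) = 2 * ENNReal.ofReal (R ^ (e + 1)) := by
            rw [ENNReal.ofReal_mul (by norm_num)]
            norm_num
          have hb2 : ENNReal.ofReal (-R ^ (e + 1) / (e + 1)) ≤ ENNReal.ofReal (R ^ (e + 1)) := by
            refine ENNReal.ofReal_le_ofReal ?_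
            have : -R ^ (e + 1) / (e + 1) = R ^ (e + 1) / (-(e + 1)) := by
              rw [neg_div, div_neg]
            rw [this]
            exact div_le_self hBnn (by linarith)
          calc ENNReal.ofReal (2 * R ^ (e + 1)) + 2 * ENNReal.ofReal (-R ^ (e + 1) / (e + 1))
              ≤ 2 * ENNReal.ofReal (R ^ (e + 1)) + 2 * ENNReal.ofReal (R ^ (e + 1)) := by
                rw [hb1]
                exact add_le_add le_rfl (mul_le_mul_right hb2 _)
            _ = 4 * ENNReal.ofReal (R ^ (e + 1)) := by ring
      _ = 4 * ENNReal.ofReal ((2 * M) ^ p * R ^ (e + 1)) := by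
          rw [ENNReal.ofReal_mul (Real.rpow_nonneg (by linarith) p)]
          ring
      _ ≤ 4 * ENNReal.ofReal ((2:ℝ) ^ (n:ℝ)) :=
          mul_le_mul_right (ENNReal.ofReal_le_ofReal hkey) _
  have piece2 : ∫⁻ t in Ioi (2 * M),
      ENNReal.ofReal (t ^ p * (max |t - x₁| R) ^ e) ≤
      ENNReal.ofReal ((2:ℝ) ^ (n:ℝ)) *
        ENNReal.ofReal (-(4:ℝ) ^ ((-3/2:ℝ) + 1) / ((-3/2:ℝ) + 1)) := by
    have hpt : ∀ t ∈ Ioi (2 * M), ENNReal.ofReal (t ^ p * (max |t - x₁| R) ^ e) ≤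
        ENNReal.ofReal ((2:ℝ) ^ (n:ℝ)) * ENNReal.ofReal (t ^ (-3/2 : ℝ)) := by
      intro t ht
      have ht' : 2 * M < t := ht
      have ht8 : (8:ℝ) < t := by linarith
      have ht0 : (0:ℝ) < t := by linarith
      have hx1M : x₁ ≤ M := le_max_left _ _
      have hhalf : t / 2 ≤ max |t - x₁| R := by
        have : t / 2 ≤ t - x₁ := by linarith
        exact le_trans (le_trans this (le_abs_self _)) (le_max_left _ _)
      have hmax : (max |t - x₁| R) ^ e ≤ (t / 2) ^ e :=
        Real.rpow_le_rpow_of_nonpos (by linarith) hhalf he0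
      have h1 : t ^ p * (max |t - x₁| R) ^ e ≤ t ^ p * (t / 2) ^ e :=
        mul_le_mul_of_nonneg_left hmax (Real.rpow_nonneg ht0.le p)
      have h2 : t ^ p * (t / 2) ^ e = 2 ^ (-e) * t ^ (p + e) := by
        rw [Real.div_rpow ht0.le (by norm_num), Real.rpow_add ht0, div_eq_mul_inv,
          ← Real.rpow_neg (by norm_num : (0:ℝ) ≤ 2)]
        ring
      have h3 : t ^ (p + e) ≤ t ^ (-3/2 : ℝ) :=
        Real.rpow_le_rpow_of_exponent_le (by linarith)
          (by rw [hpdef, hedef]; linarith)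
      have h4 : (2:ℝ) ^ (-e) ≤ (2:ℝ) ^ (n:ℝ) :=
        Real.rpow_le_rpow_of_exponent_le one_le_two (by rw [hedef]; linarith)
      calc ENNReal.ofReal (t ^ p * (max |t - x₁| R) ^ e)
          ≤ ENNReal.ofReal (2 ^ (-e) * t ^ (-3/2 : ℝ)) := by
            refine ENNReal.ofReal_le_ofReal (le_trans h1 ?_)
            rw [h2]
            exact mul_le_mul_of_nonneg_left h3 (Real.rpow_nonneg (by norm_num) _)
        _ ≤ ENNReal.ofReal ((2:ℝ) ^ (n:ℝ)) * ENNReal.ofReal (t ^ (-3/2 : ℝ)) := by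
            rw [ENNReal.ofReal_mul (Real.rpow_nonneg (by norm_num) _)]
            exact mul_le_mul_of_nonneg_right (ENNReal.ofReal_le_ofReal h4) zero_le
      done
    calc ∫⁻ t in Ioi (2 * M), ENNReal.ofReal (t ^ p * (max |t - x₁| R) ^ e)
        ≤ ∫⁻ t in Ioi (2 * M),
            ENNReal.ofReal ((2:ℝ) ^ (n:ℝ)) * ENNReal.ofReal (t ^ (-3/2 : ℝ)) :=
          setLIntegral_mono' measurableSet_Ioi hpt
      _ = ENNReal.ofReal ((2:ℝ) ^ (n:ℝ)) *
            ∫⁻ t in Ioi (2 * M), ENNReal.ofReal (t ^ (-3/2 : ℝ)) :=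
          lintegral_const_mul' _ _ ENNReal.ofReal_ne_top
      _ ≤ ENNReal.ofReal ((2:ℝ) ^ (n:ℝ)) *
            ∫⁻ t in Ioi (4:ℝ), ENNReal.ofReal (t ^ (-3/2 : ℝ)) := by
          refine mul_le_mul_right (lintegral_mono_set fun t ht => ?_) _
          exact lt_trans (by linarith : (4:ℝ) < 2 * M) ht
      _ = ENNReal.ofReal ((2:ℝ) ^ (n:ℝ)) *
            ENNReal.ofReal (-(4:ℝ) ^ ((-3/2:ℝ) + 1) / ((-3/2:ℝ) + 1)) := by
          rw [lint_Ioi_rpow (by norm_num) (by norm_num)]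
  exact add_le_add piece1 piece2


lemma abs_coord_le_norm {m : ℕ} (w : EuclideanSpace ℝ (Fin m)) (i : Fin m) : |w i| ≤ ‖w‖ := by
  rw [EuclideanSpace.norm_eq, ← Real.sqrt_sq_eq_abs]
  refine Real.sqrt_le_sqrt ?_
  have h := Finset.single_le_sum (f := fun j => ‖w j‖ ^ 2)
    (fun j _ => sq_nonneg _) (Finset.mem_univ i)
  simpa [Real.norm_eq_abs, sq_abs] using h

lemma norm_sq_eq_sum {m : ℕ} (w : EuclideanSpace ℝ (Fin m)) : ‖w‖ ^ 2 = ∑ i, w i ^ 2 := by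
  rw [EuclideanSpace.norm_eq, Real.sq_sqrt (by positivity)]
  simp [Real.norm_eq_abs, sq_abs]

lemma volball (n : ℕ) (hn : 1 ≤ n) {t : ℝ} (ht : 0 ≤ t) :
    volume {y : Fin n → ℝ | ∑ j, y j ^ 2 ≤ t} =
      ENNReal.ofReal (Real.sqrt t) ^ n * kball n := by
  haveI : Nonempty (Fin n) := ⟨⟨0, by omega⟩⟩
  have hmeas : MeasurableSet {y : Fin n → ℝ | ∑ j, y j ^ 2 ≤ t} :=
    measurableSet_le (Finset.measurable_sum _ fun j _ => (measurable_pi_apply j).pow_const 2)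
      measurable_const
  rw [← (EuclideanSpace.volume_preserving_symm_measurableEquiv_toLp (Fin n)).measure_preimage
    hmeas.nullMeasurableSet]
  have hset : (MeasurableEquiv.toLp 2 (Fin n → ℝ)).symm ⁻¹' {y | ∑ j, y j ^ 2 ≤ t} =
      Metric.closedBall (0 : EuclideanSpace ℝ (Fin n)) (Real.sqrt t) := by
    ext z
    simp only [Set.mem_preimage, Set.mem_setOf_eq, Metric.mem_closedBall, dist_zero_right]
    have hz : ∀ j, ((MeasurableEquiv.toLp 2 (Fin n → ℝ)).symm z) j = z j := fun j => rfl
    simp_rw [hz]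
    rw [← norm_sq_eq_sum]
    constructor
    · intro h
      have h2 := Real.sqrt_le_sqrt h
      rwa [Real.sqrt_sq (norm_nonneg z)] at h2
    · intro h
      calc ‖z‖ ^ 2 ≤ Real.sqrt t ^ 2 := by nlinarith [norm_nonneg z, Real.sqrt_nonneg t]
        _ = t := Real.sq_sqrt ht
  rw [hset, EuclideanSpace.volume_closedBall]
  simp [kball, Fintype.card_fin]

theorem stmt15 (d : ℕ) (hd : 4 ≤ d) :
    (⨆ x : EuclideanSpace ℝ (Fin d),
        ∫⁻ z : EuclideanSpace ℝ (Fin d),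
          ENNReal.ofReal
            (|Set.indicator {w : EuclideanSpace ℝ (Fin d) | 4 < w ⟨0, by omega⟩ ∧ ‖w‖^2 - (w ⟨0, by omega⟩)^2 ≤ w ⟨0, by omega⟩}
                (fun w => -(w ⟨0, by omega⟩)⁻¹) z| * ‖z - x‖ ^ ((2:ℝ) - d))) < ⊤ := by
  obtain ⟨n, rfl⟩ : ∃ n, d = n + 1 := ⟨d - 1, by omega⟩
  have hn : 3 ≤ n := by omega
  have hn3 : (3:ℝ) ≤ n := by exact_mod_cast hn
  have h0 : ∀ (h : 0 < n + 1), (⟨0, h⟩ : Fin (n + 1)) = 0 := fun _ => rfl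
  simp only [h0]
  set s : ℝ := (2:ℝ) - ((n + 1 : ℕ) : ℝ) with hsdef
  have hs : s = 2 - ((n:ℝ) + 1) := by rw [hsdef]; push_cast; ring
  have hs0 : s ≤ 0 := by rw [hs]; linarith
  set A : Set (EuclideanSpace ℝ (Fin (n + 1))) :=
    {w | 4 < w 0 ∧ ‖w‖ ^ 2 - w 0 ^ 2 ≤ w 0} with hA
  set X : ℝ≥0∞ := ENNReal.ofReal ((2:ℝ) ^ ((n + 1 : ℕ) : ℝ)) * kball (n + 1) * 2 with hX
  set C1 : ℝ≥0∞ := 2 * X with hC1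
  set C2 : ℝ≥0∞ := (4 * ENNReal.ofReal ((2:ℝ) ^ (n:ℝ)) +
      ENNReal.ofReal ((2:ℝ) ^ (n:ℝ)) *
        ENNReal.ofReal (-(4:ℝ) ^ ((-3/2:ℝ) + 1) / ((-3/2:ℝ) + 1))) * kball n with hC2
  have hCtop : C1 + C2 < ⊤ := by
    refine ENNReal.add_lt_top.2 ⟨?_, ?_⟩
    · rw [hC1, hX]
      have h1 : ENNReal.ofReal ((2:ℝ) ^ ((n + 1 : ℕ) : ℝ)) * kball (n + 1) * 2 < ⊤ :=
        ENNReal.mul_lt_top (ENNReal.mul_lt_top ENNReal.ofReal_lt_top (kball_lt_top _))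
          (by norm_num)
      exact ENNReal.mul_lt_top (by norm_num) h1
    · rw [hC2]
      exact ENNReal.mul_lt_top (ENNReal.add_lt_top.2
        ⟨ENNReal.mul_lt_top (by norm_num) ENNReal.ofReal_lt_top,
         ENNReal.mul_lt_top ENNReal.ofReal_lt_top ENNReal.ofReal_lt_top⟩) (kball_lt_top _)
  refine lt_of_le_of_lt (iSup_le fun x => ?_) hCtop
  set x₁ : ℝ := x 0 with hx1
  set M : ℝ := max x₁ 4 with hM
  have hM4 : (4:ℝ) ≤ M := le_max_right _ _
  have hMpos : (0:ℝ) < M := by linarith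
  set R : ℝ := Real.sqrt M with hRd
  have hRpos : 0 < R := Real.sqrt_pos.2 hMpos
  have hR2 : R ^ 2 = M := Real.sq_sqrt hMpos.le
  set F : EuclideanSpace ℝ (Fin (n + 1)) → ℝ≥0∞ := fun z =>
    ENNReal.ofReal (|A.indicator (fun w => -(w 0)⁻¹) z| * ‖z - x‖ ^ s) with hF
  show ∫⁻ z, F z ≤ C1 + C2
  rw [← lintegral_add_compl F (measurableSet_ball (x := x) (ε := R))]
  have hz0lb : ∀ z ∈ A, z ∈ Metric.ball x R → M / 2 ≤ z 0 := by
    intro z hzA hzB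
    have hco : |z 0 - x₁| ≤ ‖z - x‖ := by
      have h := abs_coord_le_norm (z - x) 0
      simpa using h
    have hlt : ‖z - x‖ < R := by rwa [Metric.mem_ball, dist_eq_norm] at hzB
    have hz4 : (4:ℝ) < z 0 := hzA.1
    rcases le_or_gt x₁ 4 with h | h
    · have hMe : M = 4 := max_eq_right h
      rw [hMe]; linarith
    · have hMx : M = x₁ := max_eq_left h.le
      have hsq : R ≤ x₁ / 2 := by
        rw [hRd, hMx]
        have h1 : x₁ ≤ (x₁ / 2) ^ 2 := by nlinarith
        calc Real.sqrt x₁ ≤ Real.sqrt ((x₁ / 2) ^ 2) := Real.sqrt_le_sqrt h1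
          _ = x₁ / 2 := Real.sqrt_sq (by linarith)
      have h2 : |z 0 - x₁| < R := lt_of_le_of_lt hco hlt
      have h3 := (abs_lt.1 h2).1
      rw [hMx]; linarith
  have hnear : ∫⁻ z in Metric.ball x R, F z ≤ C1 := by
    have hnear_pt : ∀ z ∈ Metric.ball x R,
        F z ≤ ENNReal.ofReal (2 / M) * ENNReal.ofReal (‖z - x‖ ^ s) := by
      intro z hz
      by_cases hzA : z ∈ A
      · rw [hF]
        simp only []
        rw [Set.indicator_of_mem hzA]
        have hz4 : (4:ℝ) < z 0 := hzA.1
        have habs : |(-(z 0)⁻¹)| = (z 0)⁻¹ := by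
          rw [abs_neg, abs_inv, abs_of_pos (by linarith)]
        rw [habs]
        have hinv : (z 0)⁻¹ ≤ 2 / M := by
          have h1 := hz0lb z hzA hz
          have h2 : (0:ℝ) < M / 2 := by linarith
          calc (z 0)⁻¹ ≤ (M / 2)⁻¹ := by
                exact inv_anti₀ h2 h1
            _ = 2 / M := by rw [inv_div]
        rw [← ENNReal.ofReal_mul (by positivity : (0:ℝ) ≤ 2 / M)]
        exact ENNReal.ofReal_le_ofReal
          (mul_le_mul_of_nonneg_right hinv (Real.rpow_nonneg (norm_nonneg _) s))
      · rw [hF]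
        simp only []
        rw [Set.indicator_of_notMem hzA]
        simp
    calc ∫⁻ z in Metric.ball x R, F z
        ≤ ∫⁻ z in Metric.ball x R,
            ENNReal.ofReal (2 / M) * ENNReal.ofReal (‖z - x‖ ^ s) :=
          setLIntegral_mono' measurableSet_ball hnear_pt
      _ = ENNReal.ofReal (2 / M) *
            ∫⁻ z in Metric.ball x R, ENNReal.ofReal (‖z - x‖ ^ s) :=
          lintegral_const_mul' _ _ ENNReal.ofReal_ne_top
      _ = ENNReal.ofReal (2 / M) *
            ∫⁻ y in Metric.ball (0 : EuclideanSpace ℝ (Fin (n + 1))) R,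
              ENNReal.ofReal (‖y‖ ^ s) := by
          congr 1
          rw [← lintegral_indicator measurableSet_ball,
            ← lintegral_indicator measurableSet_ball]
          rw [← lintegral_add_right_eq_self (μ := (volume : Measure (EuclideanSpace ℝ (Fin (n + 1)))))
            (fun z => (Metric.ball x R).indicator
              (fun z => ENNReal.ofReal (‖z - x‖ ^ s)) z) x]
          congr 1 with y
          by_cases hy : y ∈ Metric.ball (0 : EuclideanSpace ℝ (Fin (n + 1))) R
          · have hyx : y + x ∈ Metric.ball x R := by
              rw [Metric.mem_ball, dist_eq_norm, add_sub_cancel_right]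
              rwa [Metric.mem_ball, dist_zero_right] at hy
            rw [Set.indicator_of_mem hyx, Set.indicator_of_mem hy, add_sub_cancel_right]
          · have hyx : y + x ∉ Metric.ball x R := by
              rw [Metric.mem_ball, dist_eq_norm, add_sub_cancel_right]
              rwa [Metric.mem_ball, dist_zero_right] at hy
            rw [Set.indicator_of_notMem hyx, Set.indicator_of_notMem hy]
      _ ≤ ENNReal.ofReal (2 / M) * (ENNReal.ofReal (R ^ 2) * X) := by
          refine mul_le_mul_right ?_ _
          have hd2 := dyadic (n + 1) (by omega) R hRpos
          rw [hX]
          exact hd2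
      _ = C1 := by
          rw [← mul_assoc, ← ENNReal.ofReal_mul (by positivity), hR2]
          have h2M : 2 / M * M = 2 := by field_simp
          rw [h2M, hC1]
          norm_num
  have hfar : ∫⁻ z in (Metric.ball x R)ᶜ, F z ≤ C2 := by
    set Φ := (MeasurableEquiv.toLp 2 (Fin (n + 1) → ℝ)).symm.trans
      (MeasurableEquiv.piFinSuccAbove (fun _ : Fin (n + 1) => ℝ) 0) with hΦd
    have hΦ : MeasurePreserving Φ volume
        ((volume : Measure ℝ).prod (volume : Measure (Fin n → ℝ))) := by
      have h1 := EuclideanSpace.volume_preserving_symm_measurableEquiv_toLp (Fin (n + 1))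
      have h2 := measurePreserving_piFinSuccAbove (fun _ : Fin (n + 1) => (volume : Measure ℝ)) 0
      exact h2.comp h1
    set H : ℝ × (Fin n → ℝ) → ℝ≥0∞ := fun q =>
      Set.indicator {q : ℝ × (Fin n → ℝ) | 4 < q.1 ∧ ∑ j, q.2 j ^ 2 ≤ q.1}
        (fun q => ENNReal.ofReal (q.1⁻¹ * (max |q.1 - x₁| R) ^ s)) q with hH
    have hHmeas : Measurable H := by
      refine Measurable.indicator ?_ ?_
      · fun_prop
      · simp only [Set.setOf_and]
        exact (measurableSet_lt measurable_const measurable_fst).inter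
          (measurableSet_le
            (Finset.measurable_sum _ fun j _ =>
              ((measurable_pi_apply j).comp measurable_snd).pow_const 2)
            measurable_fst)
    have hcoord1 : ∀ z : EuclideanSpace ℝ (Fin (n + 1)), (Φ z).1 = z 0 := fun z => rfl
    have hcoord2 : ∀ (z : EuclideanSpace ℝ (Fin (n + 1))) (j : Fin n),
        (Φ z).2 j = z (Fin.succ j) := by
      intro z j
      show z ((0 : Fin (n + 1)).succAbove j) = z (Fin.succ j)
      rw [Fin.zero_succAbove]
    have hfar_pt : ∀ z ∈ (Metric.ball x R)ᶜ, F z ≤ H (Φ z) := by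
      intro z hz
      by_cases hzA : z ∈ A
      · have hz4 : (4:ℝ) < z 0 := hzA.1
        have hz0pos : (0:ℝ) < z 0 := by linarith
        have hmem : Φ z ∈ {q : ℝ × (Fin n → ℝ) | 4 < q.1 ∧ ∑ j, q.2 j ^ 2 ≤ q.1} := by
          constructor
          · rw [hcoord1]; exact hz4
          · have hsum : ∑ j, (Φ z).2 j ^ 2 = ‖z‖ ^ 2 - z 0 ^ 2 := by
              have hns := norm_sq_eq_sum z
              rw [hns, Fin.sum_univ_succ]
              simp_rw [hcoord2]
              ring
            rw [hcoord1, hsum]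
            exact hzA.2
        rw [hF, hH]
        simp only []
        rw [Set.indicator_of_mem hmem, Set.indicator_of_mem hzA, hcoord1]
        have habs : |(-(z 0)⁻¹)| = (z 0)⁻¹ := by
          rw [abs_neg, abs_inv, abs_of_pos hz0pos]
        rw [habs]
        refine ENNReal.ofReal_le_ofReal ?_
        refine mul_le_mul_of_nonneg_left ?_ (by positivity)
        have h1 : max |z 0 - x₁| R ≤ ‖z - x‖ := by
          refine max_le ?_ ?_
          · have h := abs_coord_le_norm (z - x) 0
            simpa using h
          · rw [Set.mem_compl_iff, Metric.mem_ball, dist_eq_norm, not_lt] at hz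
            exact hz
        exact Real.rpow_le_rpow_of_nonpos (lt_max_of_lt_right hRpos) h1 hs0
      · rw [hF]
        simp only []
        rw [Set.indicator_of_notMem hzA]
        simp
    have hSm : ∀ t : ℝ, MeasurableSet {y : Fin n → ℝ | ∑ j, y j ^ 2 ≤ t} := fun t =>
      measurableSet_le (Finset.measurable_sum _ fun j _ => (measurable_pi_apply j).pow_const 2)
        measurable_const
    have hinner : ∀ t : ℝ, (∫⁻ y, H (t, y)) = Set.indicator (Set.Ioi (4:ℝ))
        (fun t => ENNReal.ofReal (t⁻¹ * (max |t - x₁| R) ^ s) *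
          (ENNReal.ofReal (Real.sqrt t) ^ n * kball n)) t := by
      intro t
      by_cases ht : 4 < t
      · have hue : (fun y : Fin n → ℝ => H (t, y)) = fun y =>
            Set.indicator {y : Fin n → ℝ | ∑ j, y j ^ 2 ≤ t}
              (fun _ => ENNReal.ofReal (t⁻¹ * (max |t - x₁| R) ^ s)) y := by
          funext y
          by_cases hy : ∑ j, y j ^ 2 ≤ t
          · have hq : ((t, y) : ℝ × (Fin n → ℝ)) ∈
                {q : ℝ × (Fin n → ℝ) | 4 < q.1 ∧ ∑ j, q.2 j ^ 2 ≤ q.1} := ⟨ht, hy⟩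
            have hy' : y ∈ {y : Fin n → ℝ | ∑ j, y j ^ 2 ≤ t} := hy
            rw [hH]
            simp only []
            rw [Set.indicator_of_mem hq, Set.indicator_of_mem hy']
          · have hq : ((t, y) : ℝ × (Fin n → ℝ)) ∉
                {q : ℝ × (Fin n → ℝ) | 4 < q.1 ∧ ∑ j, q.2 j ^ 2 ≤ q.1} := fun hc => hy hc.2
            have hy' : y ∉ {y : Fin n → ℝ | ∑ j, y j ^ 2 ≤ t} := hy
            rw [hH]
            simp only []
            rw [Set.indicator_of_notMem hq, Set.indicator_of_notMem hy']
        rw [hue, lintegral_indicator_const (hSm t),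
          volball n (by omega) (by linarith : (0:ℝ) ≤ t),
          Set.indicator_of_mem (Set.mem_Ioi.2 ht)]
      · have hze : (fun y : Fin n → ℝ => H (t, y)) = fun _ => 0 := by
          funext y
          rw [hH]
          simp only []
          rw [Set.indicator_of_notMem (fun hc => ht hc.1)]
        rw [hze, Set.indicator_of_notMem (by simpa using ht)]
        simp
    calc ∫⁻ z in (Metric.ball x R)ᶜ, F z
        ≤ ∫⁻ z in (Metric.ball x R)ᶜ, H (Φ z) :=
          setLIntegral_mono' measurableSet_ball.compl hfar_pt
      _ ≤ ∫⁻ z, H (Φ z) := setLIntegral_le_lintegral _ _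
      _ = ∫⁻ q, H q ∂((volume : Measure ℝ).prod (volume : Measure (Fin n → ℝ))) :=
          hΦ.lintegral_comp hHmeas
      _ = ∫⁻ t : ℝ, ∫⁻ y : Fin n → ℝ, H (t, y) := by
          rw [lintegral_prod _ hHmeas.aemeasurable]
      _ = ∫⁻ t in Set.Ioi (4:ℝ), ENNReal.ofReal (t⁻¹ * (max |t - x₁| R) ^ s) *
            (ENNReal.ofReal (Real.sqrt t) ^ n * kball n) := by
          simp_rw [hinner]
          rw [lintegral_indicator measurableSet_Ioi]
      _ ≤ ∫⁻ t in Set.Ioi (4:ℝ), ENNReal.ofReal (t ^ (((n:ℝ) - 2) / 2) *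
            (max |t - x₁| R) ^ ((2:ℝ) - ((n:ℝ) + 1))) * kball n := by
          refine setLIntegral_mono' measurableSet_Ioi fun t ht => ?_
          have ht4 : (4:ℝ) < t := ht
          have ht0 : (0:ℝ) < t := by linarith
          rw [← ENNReal.ofReal_pow (Real.sqrt_nonneg t), ← mul_assoc,
            ← ENNReal.ofReal_mul (by positivity)]
          refine mul_le_mul_left (ENNReal.ofReal_le_ofReal (le_of_eq ?_)) _
          rw [hs]
          have hsq : Real.sqrt t ^ n = t ^ ((n:ℝ) / 2) := by
            rw [Real.sqrt_eq_rpow, ← Real.rpow_natCast (t ^ ((1:ℝ) / 2)) n,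
              ← Real.rpow_mul ht0.le]
            congr 1
            ring
          rw [hsq]
          rw [show t⁻¹ = t ^ (-1:ℝ) from (Real.rpow_neg_one t).symm]
          rw [mul_right_comm, ← Real.rpow_add ht0]
          congr 2
          ring
      _ = (∫⁻ t in Set.Ioi (4:ℝ), ENNReal.ofReal (t ^ (((n:ℝ) - 2) / 2) *
            (max |t - x₁| R) ^ ((2:ℝ) - ((n:ℝ) + 1)))) * kball n :=
          lintegral_mul_const' _ _ (kball_lt_top n).ne
      _ ≤ C2 := by
          rw [hC2]
          exact mul_le_mul_left (oneD n hn x₁) _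
  exact add_le_add hnear hfar
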